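/- Let m > 0, s0 > 0, α ∈ (0,1), f(u) = u(1 − u)(2u − 1 + α), and n ∈ ℕ with n ≥ 1. Suppose U₁, U₂ : [0,∞) × ℤ → [0,1] are semi-discrete solutions, i.e. for every k ∈ ℤ and i ∈ {1,2} the map t ↦ U_i(t,k) is differentiable with ∂_t U_i(t,k) = (m/2) n² (U_i(t,k+1) − 2 U_i(t,k) + U_i(t,k−1)) + s0 f(U_i(t,k)) for all t ≥ 0. Then for every t ≥ 0, sup_{k ∈ ℤ} |U₁(t,k) − U₂(t,k)| ≤ exp((1 + α) s0 t) · sup_{k ∈ ℤ} |U₁(0,k) − U₂(0,k)|. -/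

import Mathlib

open Set MeasureTheory intervalIntegral

/-- `U : ℝ → ℤ → ℝ` (representing a function on `[0,∞) × (1/n)ℤ` via the value `U t k`
at lattice point `k/n`) is a semi-discrete solution of the bistable equation if it takes
values in `[0,1]` and for every lattice point `k` the map `t ↦ U t k` is differentiable
on `[0,∞)` with derivative given by the discrete Laplacian plus reaction term. -/
def IsSemiDiscreteSolution (m s0 : ℝ) (f : ℝ → ℝ) (n : ℕ) (U : ℝ → ℤ → ℝ) : Prop :=
  (∀ t, 0 ≤ t → ∀ k : ℤ, U t k ∈ Set.Icc (0 : ℝ) 1) ∧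
  ∀ k : ℤ, ∀ t, 0 ≤ t →
    HasDerivWithinAt (fun s => U s k)
      (m / 2 * (n : ℝ) ^ 2 * (U t (k + 1) - 2 * U t k + U t (k - 1)) + s0 * f (U t k))
      (Set.Ici 0) t

theorem semi_discrete_gronwall
    (m s0 α : ℝ) (hm : 0 < m) (hs0 : 0 < s0) (hα : α ∈ Set.Ioo (0 : ℝ) 1)
    (f : ℝ → ℝ) (hf : ∀ u, f u = u * (1 - u) * (2 * u - 1 + α))
    (n : ℕ) (hn : 1 ≤ n)
    (U₁ U₂ : ℝ → ℤ → ℝ)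
    (hU₁ : IsSemiDiscreteSolution m s0 f n U₁)
    (hU₂ : IsSemiDiscreteSolution m s0 f n U₂) :
    ∀ t, 0 ≤ t →
      (⨆ k : ℤ, |U₁ t k - U₂ t k|)
        ≤ Real.exp ((1 + α) * s0 * t) * ⨆ k : ℤ, |U₁ 0 k - U₂ 0 k| := by
  obtain ⟨hA1, hD1⟩ := hU₁
  obtain ⟨hA2, hD2⟩ := hU₂
  obtain ⟨hα0, hα1⟩ := hα
  have hfc : Continuous f := by
    have hfe : f = fun u => u * (1 - u) * (2 * u - 1 + α) := funext hf
    rw [hfe]; continuity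
  intro T hT
  obtain ⟨c, hc⟩ : ∃ c : ℝ, c = m / 2 * (n : ℝ) ^ 2 := ⟨_, rfl⟩
  have hc0 : (0:ℝ) ≤ c := by rw [hc]; positivity
  obtain ⟨L, hL⟩ : ∃ L : ℝ, L = 1 + α := ⟨_, rfl⟩
  have hL0 : (0:ℝ) < L := by rw [hL]; linarith
  obtain ⟨K, hK⟩ : ∃ K : ℝ, K = 2 * c + s0 * L := ⟨_, rfl⟩
  have hK0 : (0:ℝ) ≤ K := by rw [hK]; positivity
  -- the sup function
  set Φ : ℝ → ℝ := fun t => ⨆ k : ℤ, |U₁ t k - U₂ t k| with hΦdef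
  -- boundedness
  have hbd : ∀ t, 0 ≤ t → ∀ k : ℤ, |U₁ t k - U₂ t k| ≤ 1 := by
    intro t ht k
    have h1 := hA1 t ht k
    have h2 := hA2 t ht k
    rw [abs_le]
    constructor <;> [linarith [h1.1, h2.2]; linarith [h1.2, h2.1]]
  have hBdd : ∀ t, 0 ≤ t → BddAbove (Set.range fun k : ℤ => |U₁ t k - U₂ t k|) := by
    intro t ht
    exact ⟨1, by rintro x ⟨k, rfl⟩; exact hbd t ht k⟩
  have hΦle : ∀ t, 0 ≤ t → ∀ k : ℤ, |U₁ t k - U₂ t k| ≤ Φ t := by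
    intro t ht k
    exact le_ciSup (hBdd t ht) k
  have hΦ0 : ∀ t, 0 ≤ t → 0 ≤ Φ t := fun t ht =>
    (abs_nonneg _).trans (hΦle t ht 0)
  -- Lipschitz bound for f on [0,1]
  have hflip : ∀ u v : ℝ, u ∈ Set.Icc (0:ℝ) 1 → v ∈ Set.Icc (0:ℝ) 1 →
      |f u - f v| ≤ L * |u - v| := by
    intro u v hu hv
    obtain ⟨hu0, hu1⟩ := hu
    obtain ⟨hv0, hv1⟩ := hv
    rw [hf, hf]
    have key : u * (1 - u) * (2 * u - 1 + α) - v * (1 - v) * (2 * v - 1 + α)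
        = (u - v) * (-(2 * (u^2 + u*v + v^2)) + (3 - α) * (u + v) + (α - 1)) := by ring
    rw [key, abs_mul]
    have hg : |(-(2 * (u^2 + u*v + v^2)) + (3 - α) * (u + v) + (α - 1))| ≤ L := by
      rw [abs_le, hL]
      constructor
      · nlinarith [mul_nonneg hu0 (sub_nonneg.2 hu1), mul_nonneg hv0 (sub_nonneg.2 hv1),
          mul_nonneg (mul_nonneg hα0.le (sub_nonneg.2 hu1)) (sub_nonneg.2 hv1),
          mul_nonneg hu0 (sub_nonneg.2 hv1), mul_nonneg hv0 (sub_nonneg.2 hu1)]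
      · nlinarith [sq_nonneg (3*u + 3*v - 3 + α), sq_nonneg (u - v), sq_nonneg α]
    calc |u - v| * |(-(2 * (u^2 + u*v + v^2)) + (3 - α) * (u + v) + (α - 1))|
        ≤ |u - v| * L := mul_le_mul_of_nonneg_left hg (abs_nonneg _)
      _ = L * |u - v| := mul_comm _ _
  -- continuity of solutions
  have hU1c : ∀ k : ℤ, ContinuousOn (fun s => U₁ s k) (Set.Ici 0) := fun k x hx =>
    (hD1 k x hx).continuousWithinAt
  have hU2c : ∀ k : ℤ, ContinuousOn (fun s => U₂ s k) (Set.Ici 0) := fun k x hx =>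
    (hD2 k x hx).continuousWithinAt
  have hdc : ∀ k : ℤ, ContinuousOn (fun s => U₁ s k - U₂ s k) (Set.Ici 0) := fun k =>
    (hU1c k).sub (hU2c k)
  -- derivative of the difference
  set D : ℝ → ℤ → ℝ := fun t k =>
    c * ((U₁ t (k+1) - U₂ t (k+1)) - 2 * (U₁ t k - U₂ t k) + (U₁ t (k-1) - U₂ t (k-1)))
      + s0 * (f (U₁ t k) - f (U₂ t k)) with hDdef
  have hdD : ∀ (k : ℤ) (t : ℝ), 0 ≤ t →
      HasDerivWithinAt (fun s => U₁ s k - U₂ s k) (D t k) (Set.Ici 0) t := by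
    intro k t ht
    have h := (hD1 k t ht).sub (hD2 k t ht)
    refine h.congr_deriv ?_
    simp only [hDdef, hc]
    ring
  -- uniform bound on the derivative
  have hDbd : ∀ (k : ℤ) (t : ℝ), 0 ≤ t → ‖D t k‖ ≤ 4 * c + s0 * L := by
    intro k t ht
    simp only [hDdef, Real.norm_eq_abs]
    have h1 := hbd t ht (k+1)
    have h2 := hbd t ht k
    have h3 := hbd t ht (k-1)
    have h4 : |f (U₁ t k) - f (U₂ t k)| ≤ L * |U₁ t k - U₂ t k| :=
      hflip _ _ (hA1 t ht k) (hA2 t ht k)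
    have h5 : |f (U₁ t k) - f (U₂ t k)| ≤ L :=
      h4.trans (by nlinarith)
    have h6 : |(U₁ t (k+1) - U₂ t (k+1)) - 2 * (U₁ t k - U₂ t k) + (U₁ t (k-1) - U₂ t (k-1))| ≤ 4 := by
      have h2' : |2 * (U₁ t k - U₂ t k)| ≤ 2 := by rw [abs_mul]; simp; linarith [hbd t ht k]
      calc |(U₁ t (k+1) - U₂ t (k+1)) - 2 * (U₁ t k - U₂ t k) + (U₁ t (k-1) - U₂ t (k-1))|
          ≤ |(U₁ t (k+1) - U₂ t (k+1)) - 2 * (U₁ t k - U₂ t k)| + |U₁ t (k-1) - U₂ t (k-1)| :=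
            abs_add_le _ _
        _ ≤ (|U₁ t (k+1) - U₂ t (k+1)| + |2 * (U₁ t k - U₂ t k)|) + |U₁ t (k-1) - U₂ t (k-1)| :=
            add_le_add (abs_sub _ _) le_rfl
        _ ≤ 4 := by linarith
    calc |c * ((U₁ t (k+1) - U₂ t (k+1)) - 2 * (U₁ t k - U₂ t k) + (U₁ t (k-1) - U₂ t (k-1)))
          + s0 * (f (U₁ t k) - f (U₂ t k))|
        ≤ |c * ((U₁ t (k+1) - U₂ t (k+1)) - 2 * (U₁ t k - U₂ t k) + (U₁ t (k-1) - U₂ t (k-1)))|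
          + |s0 * (f (U₁ t k) - f (U₂ t k))| := abs_add_le _ _
      _ = c * |(U₁ t (k+1) - U₂ t (k+1)) - 2 * (U₁ t k - U₂ t k) + (U₁ t (k-1) - U₂ t (k-1))|
          + s0 * |f (U₁ t k) - f (U₂ t k)| := by
            rw [abs_mul, abs_mul, abs_of_nonneg hc0, abs_of_nonneg hs0.le]
      _ ≤ c * 4 + s0 * L := by
            gcongr
      _ = 4 * c + s0 * L := by ring
  -- Lipschitz property of Φ
  have hdlip : ∀ (k : ℤ) (x y : ℝ), x ∈ Set.Ici (0:ℝ) → y ∈ Set.Ici (0:ℝ) →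
      |(U₁ y k - U₂ y k) - (U₁ x k - U₂ x k)| ≤ (4 * c + s0 * L) * |y - x| := by
    intro k x y hx hy
    have := Convex.norm_image_sub_le_of_norm_hasDerivWithin_le
      (f := fun s => U₁ s k - U₂ s k) (f' := fun t => D t k)
      (fun t ht => hdD k t ht) (fun t ht => hDbd k t ht) (convex_Ici 0) hx hy
    simpa [Real.norm_eq_abs] using this
  have hΦlip : ∀ x y : ℝ, 0 ≤ x → 0 ≤ y → Φ y ≤ Φ x + (4 * c + s0 * L) * |y - x| := by
    intro x y hx hy
    apply ciSup_le
    intro k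
    have h1 := hdlip k x y hx hy
    have h2 := hΦle x hx k
    have := abs_sub_abs_le_abs_sub (U₁ y k - U₂ y k) (U₁ x k - U₂ x k)
    linarith
  have hΦcont : ContinuousOn Φ (Set.Ici 0) := by
    have hlip : LipschitzOnWith (Real.toNNReal (4 * c + s0 * L)) Φ (Set.Ici 0) := by
      apply LipschitzOnWith.of_dist_le_mul
      intro x hx y hy
      rw [Real.dist_eq, Real.dist_eq, Real.coe_toNNReal _ (by positivity)]
      rw [abs_sub_le_iff]
      constructor
      · have h := hΦlip y x hy hx
        linarith
      · have h := hΦlip x y hx hy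
        rw [abs_sub_comm] at h
        linarith
    exact hlip.continuousOn
  -- the rescaled sup
  set ψ : ℝ → ℝ := fun s => Real.exp (2 * c * s) * Φ s with hψdef
  have hψcont : ContinuousOn ψ (Set.Ici 0) :=
    (Real.continuous_exp.comp (continuous_const.mul continuous_id)).continuousOn.mul hΦcont
  have hψ0 : ∀ x : ℝ, 0 ≤ x → 0 ≤ ψ x := by
    intro x hx
    exact mul_nonneg (Real.exp_pos _).le (hΦ0 x hx)
  have hKψc : ContinuousOn (fun s => K * ψ s) (Set.Ici 0) := continuousOn_const.mul hψcont
  have hKψint : ∀ x : ℝ, 0 ≤ x → IntervalIntegrable (fun s => K * ψ s) volume 0 x := by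
    intro x hx
    apply ContinuousOn.intervalIntegrable
    apply hKψc.mono
    rw [Set.uIcc_of_le hx]
    exact Set.Icc_subset_Ici_self
  -- the comparison function
  set G : ℝ → ℝ := fun x => Φ 0 + ∫ s in (0:ℝ)..x, K * ψ s with hGdef
  -- key integral inequality
  have hkey : ∀ x : ℝ, 0 ≤ x → ψ x ≤ G x := by
    intro x hx
    have hexinIcc : ∀ {s : ℝ}, s ∈ Set.Icc (0:ℝ) x → s ∈ Set.Ici (0:ℝ) := fun hs => hs.1
    -- per-k bound
    have hk_ineq : ∀ k : ℤ, Real.exp (2 * c * x) * |U₁ x k - U₂ x k| ≤ G x := by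
      intro k
      set g : ℝ → ℝ := fun s => Real.exp (2 * c * s) *
        (c * ((U₁ s (k+1) - U₂ s (k+1)) + (U₁ s (k-1) - U₂ s (k-1)))
          + s0 * (f (U₁ s k) - f (U₂ s k))) with hgdef
      have hgc : ContinuousOn g (Set.Icc 0 x) := by
        apply ContinuousOn.mul
        · exact (Real.continuous_exp.comp (continuous_const.mul continuous_id)).continuousOn
        · apply ContinuousOn.add
          · exact continuousOn_const.mul
              (((hdc (k+1)).mono (fun s hs => hexinIcc hs)).add
                ((hdc (k-1)).mono (fun s hs => hexinIcc hs)))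
          · exact continuousOn_const.mul
              (((hfc.comp_continuousOn ((hU1c k).mono (fun s hs => hexinIcc hs))).sub
                (hfc.comp_continuousOn ((hU2c k).mono (fun s hs => hexinIcc hs)))))
      have hgint : IntervalIntegrable g volume 0 x := by
        apply ContinuousOn.intervalIntegrable
        rwa [Set.uIcc_of_le hx]
      have hftc : ∫ s in (0:ℝ)..x, g s
          = Real.exp (2 * c * x) * (U₁ x k - U₂ x k)
            - Real.exp (2 * c * 0) * (U₁ 0 k - U₂ 0 k) := by
        apply intervalIntegral.integral_eq_sub_of_hasDeriv_right_of_le hx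
        · exact ((Real.continuous_exp.comp
            (continuous_const.mul continuous_id)).continuousOn).mul
            ((hdc k).mono (fun s hs => hexinIcc hs))
        · intro s hs
          have hs0 : (0:ℝ) ≤ s := hs.1.le
          have he : HasDerivWithinAt (fun u => Real.exp (2 * c * u))
              (2 * c * Real.exp (2 * c * s)) (Set.Ioi s) s := by
            have h0 : HasDerivAt (fun u : ℝ => 2 * c * u) (2 * c) s := by
              simpa using (hasDerivAt_id s).const_mul (2 * c)
            have h1 := h0.exp
            have h2 : Real.exp (2 * c * s) * (2 * c) = 2 * c * Real.exp (2 * c * s) := mul_comm _ _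
            rw [h2] at h1
            exact h1.hasDerivWithinAt
          have hd' : HasDerivWithinAt (fun u => U₁ u k - U₂ u k) (D s k) (Set.Ioi s) s :=
            (hdD k s hs0).mono (fun y hy => le_trans hs0 (le_of_lt hy))
          have := he.mul hd'
          apply this.congr_deriv
          simp only [hgdef, hDdef]
          ring
        · exact hgint
      -- pointwise bound on the integrand
      have hbound : ∀ s ∈ Set.Ioc (0:ℝ) x, ‖g s‖ ≤ K * ψ s := by
        intro s hs
        have hsge : (0:ℝ) ≤ s := hs.1.le
        have h1 := hΦle s hsge (k+1)
        have h2 := hΦle s hsge (k-1)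
        have h4 := hΦle s hsge k
        have h3 : |f (U₁ s k) - f (U₂ s k)| ≤ L * Φ s :=
          (hflip _ _ (hA1 s hsge k) (hA2 s hsge k)).trans
            (mul_le_mul_of_nonneg_left h4 hL0.le)
        have hin : |c * ((U₁ s (k+1) - U₂ s (k+1)) + (U₁ s (k-1) - U₂ s (k-1)))
            + s0 * (f (U₁ s k) - f (U₂ s k))| ≤ 2 * c * Φ s + s0 * (L * Φ s) := by
          have t1 := abs_add_le (c * ((U₁ s (k+1) - U₂ s (k+1)) + (U₁ s (k-1) - U₂ s (k-1))))
            (s0 * (f (U₁ s k) - f (U₂ s k)))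
          have t2 : |(U₁ s (k+1) - U₂ s (k+1)) + (U₁ s (k-1) - U₂ s (k-1))| ≤ Φ s + Φ s :=
            (abs_add_le _ _).trans (add_le_add h1 h2)
          rw [abs_mul, abs_mul, abs_of_nonneg hc0, abs_of_nonneg hs0.le] at t1
          have t3 := mul_le_mul_of_nonneg_left t2 hc0
          have t4 := mul_le_mul_of_nonneg_left h3 hs0.le
          linarith
        simp only [hgdef, Real.norm_eq_abs]
        rw [abs_mul, abs_of_pos (Real.exp_pos _)]
        calc Real.exp (2 * c * s) * |c * ((U₁ s (k+1) - U₂ s (k+1)) + (U₁ s (k-1) - U₂ s (k-1)))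
              + s0 * (f (U₁ s k) - f (U₂ s k))|
            ≤ Real.exp (2 * c * s) * (2 * c * Φ s + s0 * (L * Φ s)) :=
              mul_le_mul_of_nonneg_left hin (Real.exp_pos _).le
          _ = K * ψ s := by simp only [hψdef, hK]; ring
      have hnorm : ‖∫ s in (0:ℝ)..x, g s‖ ≤ ∫ s in (0:ℝ)..x, K * ψ s := by
        have habs := intervalIntegral.norm_integral_le_abs_of_norm_le
          (f := g) (g := fun s => K * ψ s) (μ := volume) (a := 0) (b := x)
          ?_ (hKψint x hx)
        · refine habs.trans ?_
          rw [abs_of_nonneg]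
          apply intervalIntegral.integral_nonneg hx
          intro u hu
          exact mul_nonneg hK0 (hψ0 u hu.1)
        · rw [Set.uIoc_of_le hx]
          filter_upwards [ae_restrict_mem measurableSet_Ioc] with s hs
          exact hbound s hs
      have h00 : Real.exp (2 * c * 0) * (U₁ 0 k - U₂ 0 k) = U₁ 0 k - U₂ 0 k := by
        norm_num
      have hΦ0le : |U₁ 0 k - U₂ 0 k| ≤ Φ 0 := hΦle 0 le_rfl k
      have heq : Real.exp (2 * c * x) * (U₁ x k - U₂ x k)
          = (U₁ 0 k - U₂ 0 k) + ∫ s in (0:ℝ)..x, g s := by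
        rw [hftc, h00]; ring
      calc Real.exp (2 * c * x) * |U₁ x k - U₂ x k|
          = |Real.exp (2 * c * x) * (U₁ x k - U₂ x k)| := by
            rw [abs_mul, abs_of_pos (Real.exp_pos _)]
        _ = |(U₁ 0 k - U₂ 0 k) + ∫ s in (0:ℝ)..x, g s| := by rw [heq]
        _ ≤ |U₁ 0 k - U₂ 0 k| + |∫ s in (0:ℝ)..x, g s| := abs_add_le _ _
        _ ≤ Φ 0 + ∫ s in (0:ℝ)..x, K * ψ s := by
            apply add_le_add hΦ0le
            simpa [Real.norm_eq_abs] using hnorm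
        _ = G x := rfl
    -- take sup over k
    have hΦG : Φ x ≤ G x / Real.exp (2 * c * x) := by
      apply ciSup_le
      intro k
      rw [le_div_iff₀ (Real.exp_pos _)]
      calc |U₁ x k - U₂ x k| * Real.exp (2 * c * x)
          = Real.exp (2 * c * x) * |U₁ x k - U₂ x k| := mul_comm _ _
        _ ≤ G x := hk_ineq k
    calc ψ x = Real.exp (2 * c * x) * Φ x := rfl
      _ ≤ Real.exp (2 * c * x) * (G x / Real.exp (2 * c * x)) :=
          mul_le_mul_of_nonneg_left hΦG (Real.exp_pos _).le
      _ = G x := by field_simp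
  -- Gronwall's inequality for G
  have hGcont : ContinuousOn G (Set.Icc 0 T) := by
    apply continuousOn_const.add
    have h := intervalIntegral.continuousOn_primitive_interval' (hKψint T hT)
      (by rw [Set.uIcc_of_le hT]; exact ⟨le_rfl, hT⟩)
    rwa [Set.uIcc_of_le hT] at h
  have hGderiv : ∀ x ∈ Set.Ico (0:ℝ) T, HasDerivWithinAt G (K * ψ x) (Set.Ici x) x := by
    intro x hx
    apply HasDerivWithinAt.const_add
    have hmeas : StronglyMeasurableAtFilter (fun s => K * ψ s) (nhdsWithin x (Set.Ioi x)) volume := by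
      have h := hKψc.stronglyMeasurableAtFilter_nhdsWithin measurableSet_Ici (μ := volume) x
      exact h.filter_mono (nhdsWithin_mono x (fun y hy => le_trans hx.1 hy.le))
    have hcw : ContinuousWithinAt (fun s => K * ψ s) (Set.Ioi x) x :=
      (hKψc x hx.1).mono (fun y hy => le_trans hx.1 hy.le)
    exact intervalIntegral.integral_hasDerivWithinAt_right (hKψint x hx.1) hmeas hcw
  have hGnn : ∀ x ∈ Set.Icc (0:ℝ) T, 0 ≤ G x := fun x hx =>
    (hψ0 x hx.1).trans (hkey x hx.1)
  have hgron := norm_le_gronwallBound_of_norm_deriv_right_le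
    (f := G) (f' := fun x => K * ψ x) (δ := Φ 0) (K := K) (ε := 0)
    hGcont hGderiv
    (by
      simp only [hGdef, intervalIntegral.integral_same, add_zero, Real.norm_eq_abs]
      rw [abs_of_nonneg (hΦ0 0 le_rfl)])
    (by
      intro x hx
      have h1 : ψ x ≤ G x := hkey x hx.1
      have h2 : 0 ≤ G x := hGnn x (Set.Ico_subset_Icc_self hx)
      rw [Real.norm_eq_abs, Real.norm_eq_abs, abs_of_nonneg h2,
        abs_of_nonneg (mul_nonneg hK0 (hψ0 x hx.1))]
      have := mul_le_mul_of_nonneg_left h1 hK0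
      linarith)
  have hGT := hgron T ⟨hT, le_rfl⟩
  rw [Real.norm_eq_abs, abs_of_nonneg (hGnn T ⟨hT, le_rfl⟩), sub_zero, gronwallBound_ε0] at hGT
  -- conclude
  have hfinal : Φ T ≤ Real.exp ((1 + α) * s0 * T) * Φ 0 := by
    have h1 : ψ T ≤ Φ 0 * Real.exp (K * T) := (hkey T hT).trans hGT
    have h2 : Real.exp (2 * c * T) * Φ T ≤ Real.exp (2 * c * T) * (Real.exp ((1 + α) * s0 * T) * Φ 0) := by
      have : Real.exp (2 * c * T) * (Real.exp ((1 + α) * s0 * T) * Φ 0)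
          = Φ 0 * Real.exp (K * T) := by
        rw [← mul_assoc, ← Real.exp_add, hK, hL]
        ring_nf
      rw [this]
      exact h1
    exact le_of_mul_le_mul_left h2 (Real.exp_pos _)
  exact hfinal
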